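/- Let R be a topological ring, S ⊆ R a subring that is dense as a subset of R, and M a left R-module that is smooth, i.e. for every m ∈ M the set {x ∈ R : x·m = 0} is open in R. If M is a simple R-module, then M, regarded as an S-module by restriction of scalars, is a simple S-module. -/

import Mathlib

/-- If `S` is a dense subring of a topological ring `R` and `M` is a smooth left
`R`-module (every annihilator `{x : R | x • m = 0}` is open) which is simple as an
`R`-module, then `M` is simple as an `S`-module (by restriction of scalars). -/
theorem isSimpleModule_restrict_of_dense_subring_of_smooth
    (R : Type*) [Ring R] [TopologicalSpace R] [IsTopologicalRing R]
    (S : Subring R) (hS : Dense (S : Set R))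
    (M : Type*) [AddCommGroup M] [Module R M]
    (hsmooth : ∀ m : M, IsOpen {x : R | x • m = 0})
    (hsimple : IsSimpleModule R M) :
    IsSimpleModule S M := by
  have key : ∀ (m : M) (r : R), ∃ s : S, (s : R) • m = r • m := by
    intro m r
    have hU : IsOpen {x : R | (x - r) • m = 0} := by
      have : {x : R | (x - r) • m = 0} = (fun x => x - r) ⁻¹' {x : R | x • m = 0} := rfl
      rw [this]
      exact (hsmooth m).preimage (continuous_id.sub continuous_const)
    have hne : ({x : R | (x - r) • m = 0}).Nonempty := ⟨r, by simp⟩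
    obtain ⟨x, hxS, hx⟩ := hS.exists_mem_open hU hne
    refine ⟨⟨x, hxS⟩, ?_⟩
    have : (x - r) • m = 0 := hx
    rw [sub_smul, sub_eq_zero] at this
    exact this
  haveI : Nontrivial M := IsSimpleModule.nontrivial R M
  refine { eq_bot_or_eq_top := fun N => ?_ }
  -- build an R-submodule with the same carrier
  let N' : Submodule R M :=
    { carrier := N
      add_mem' := fun ha hb => N.add_mem ha hb
      zero_mem' := N.zero_mem
      smul_mem' := by
        intro r m hm
        obtain ⟨s, hs⟩ := key m r
        rw [← hs]
        exact N.smul_mem s hm }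
  rcases hsimple.toIsSimpleOrder.2 N' with h | h
  · left
    refine le_antisymm (fun m hm => ?_) bot_le
    have : m ∈ N' := hm
    rw [h] at this
    exact this
  · right
    refine le_antisymm le_top (fun m _ => ?_)
    have : m ∈ N' := h ▸ Submodule.mem_top
    exact this
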